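/- arXiv:2006.11732 — 3 statements merged into one kernel-verified Lean document; each statement's English description precedes it below -/
import Mathlib

section
/- Every odd superderivation D of the model filiform Lie superalgebra L^{n,m} satisfies D([y_i,y_j]) = [D(y_i),y_j] - [y_i,D(y_j)] = 0 for all odd basis elements y_i, y_j; i.e., the x_1-coefficient of D(y_i) is zero for every i. Consequently every odd superderivation of L^{n,m} is a derivation of L^{n,m} regarded as a Z_2-graded Lie algebra. -/
/-!
The model filiform Lie superalgebra `L^{n,m}` with even basis `x_1,…,x_n` and odd
basis `y_1,…,y_m`, with nonzero brackets `[x_1,x_i] = -[x_i,x_1] = x_{i+1}` (2 ≤ i ≤ n-1)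
and `[x_1,y_j] = -[y_j,x_1] = y_{j+1}` (1 ≤ j ≤ m-1), satisfies super anticommutativity
and the super Jacobi identity.
-/

namespace ModelFiliform

/-- Index type: even basis indices on the left, odd on the right (0-based). -/
abbrev Idx (n m : ℕ) := Fin n ⊕ Fin m

/-- Underlying vector space over ℂ. -/
abbrev V (n m : ℕ) := Idx n m →₀ ℂ

/-- `X n m k` is the basis vector `x_k` (1-based), or `0` if out of range. -/
noncomputable def X (n m k : ℕ) : V n m :=
  if h : 1 ≤ k ∧ k ≤ n then Finsupp.single (Sum.inl ⟨k - 1, by omega⟩) 1 else 0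

/-- `Y n m k` is the basis vector `y_k` (1-based), or `0` if out of range. -/
noncomputable def Y (n m k : ℕ) : V n m :=
  if h : 1 ≤ k ∧ k ≤ m then Finsupp.single (Sum.inr ⟨k - 1, by omega⟩) 1 else 0

/-- Structure constants of `L^{n,m}`. -/
noncomputable def c (n m : ℕ) : Idx n m → Idx n m → V n m
  | Sum.inl i, Sum.inl j =>
      if i.val = 0 ∧ 1 ≤ j.val then X n m (j.val + 2)
      else if j.val = 0 ∧ 1 ≤ i.val then -X n m (i.val + 2) else 0
  | Sum.inl i, Sum.inr j => if i.val = 0 then Y n m (j.val + 2) else 0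
  | Sum.inr j, Sum.inl i => if i.val = 0 then -Y n m (j.val + 2) else 0
  | Sum.inr _, Sum.inr _ => 0

/-- The bracket of `L^{n,m}`, as a bilinear map. -/
noncomputable def brL (n m : ℕ) : V n m →ₗ[ℂ] V n m →ₗ[ℂ] V n m :=
  Finsupp.lsum ℂ (fun a =>
    LinearMap.toSpanSingleton ℂ (V n m →ₗ[ℂ] V n m)
      (Finsupp.lsum ℂ (fun b => LinearMap.toSpanSingleton ℂ (V n m) (c n m a b))))

/-- The bracket. -/
noncomputable def br (n m : ℕ) (u v : V n m) : V n m := brL n m u v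

/-- Parity of the basis indices. -/
def par (n m : ℕ) : Idx n m → ZMod 2 := Sum.elim (fun _ => 0) (fun _ => 1)

/-- `u` is homogeneous of degree `s`. -/
def IsHomog (n m : ℕ) (u : V n m) (s : ZMod 2) : Prop :=
  ∀ a ∈ u.support, par n m a = s


section Aux

lemma br_def (n m : ℕ) (u v : V n m) :
    br n m u v = u.sum (fun a r => r • v.sum (fun b s => s • c n m a b)) := by
  simp only [br, brL, Finsupp.lsum_apply, Finsupp.sum, LinearMap.coe_sum, Finset.sum_apply,
    LinearMap.smul_apply, LinearMap.toSpanSingleton_apply]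

lemma br_add_left (n m : ℕ) (u u' v : V n m) :
    br n m (u + u') v = br n m u v + br n m u' v := by
  simp only [br, map_add, LinearMap.add_apply]

lemma br_add_right (n m : ℕ) (u v v' : V n m) :
    br n m u (v + v') = br n m u v + br n m u v' := by
  simp only [br, map_add]

lemma br_zero_left (n m : ℕ) (v : V n m) : br n m 0 v = 0 := by
  simp only [br, map_zero, LinearMap.zero_apply]

lemma br_zero_right (n m : ℕ) (u : V n m) : br n m u 0 = 0 := by
  simp only [br, map_zero]

lemma br_smul_left (n m : ℕ) (r : ℂ) (u v : V n m) :
    br n m (r • u) v = r • br n m u v := by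
  simp only [br, map_smul, LinearMap.smul_apply]

/-- bracket with an odd single on the right. -/
lemma br_single_inr_right (n m : ℕ) (hn : 1 ≤ n) (u : V n m) (b : Fin m) (s : ℂ) :
    br n m u (Finsupp.single (Sum.inr b) s) =
      (u (Sum.inl ⟨0, hn⟩) * s) • Y n m (b.val + 2) := by
  rw [br_def]
  have h1 : ∀ a : Idx n m, (Finsupp.single (Sum.inr b) s).sum (fun b' s' => s' • c n m a b')
      = s • c n m a (Sum.inr b) := by
    intro a
    rw [Finsupp.sum_single_index]
    simp
  simp only [h1]
  rw [Finsupp.sum]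
  rw [Finset.sum_eq_single (Sum.inl (⟨0, hn⟩ : Fin n))]
  · by_cases h : Sum.inl (⟨0, hn⟩ : Fin n) ∈ u.support
    · simp [c, smul_smul]
    · rw [Finsupp.notMem_support_iff] at h
      simp [h]
  · intro a _ ha
    rcases a with a | a
    · have : a.val ≠ 0 := by
        intro h0
        apply ha
        congr 1
        exact Fin.ext h0
      simp [c, this]
    · simp [c]
  · intro h
    rw [Finsupp.notMem_support_iff] at h
    simp [h]

/-- bracket with an odd single on the left. -/
lemma br_single_inr_left (n m : ℕ) (hn : 1 ≤ n) (a : Fin m) (r : ℂ) (v : V n m) :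
    br n m (Finsupp.single (Sum.inr a) r) v =
      (r * v (Sum.inl ⟨0, hn⟩)) • (-Y n m (a.val + 2)) := by
  rw [br_def]
  rw [Finsupp.sum_single_index]
  · rw [Finsupp.sum]
    rw [Finset.smul_sum]
    rw [Finset.sum_eq_single (Sum.inl (⟨0, hn⟩ : Fin n))]
    · by_cases h : Sum.inl (⟨0, hn⟩ : Fin n) ∈ v.support
      · simp [c, smul_smul]
      · rw [Finsupp.notMem_support_iff] at h
        simp [h]
    · intro b _ hb
      rcases b with b | b
      · have : b.val ≠ 0 := by
          intro h0
          apply hb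
          congr 1
          exact Fin.ext h0
        simp [c, this]
      · simp [c]
    · intro h
      rw [Finsupp.notMem_support_iff] at h
      simp [h]
  · simp

lemma isHomog_single_inl (n m : ℕ) (i : Fin n) (r : ℂ) :
    IsHomog n m (Finsupp.single (Sum.inl i) r) 0 := by
  intro a ha
  have := Finsupp.support_single_subset ha
  simp only [Finset.mem_singleton] at this
  subst this
  rfl

lemma isHomog_single_inr (n m : ℕ) (i : Fin m) (r : ℂ) :
    IsHomog n m (Finsupp.single (Sum.inr i) r) 1 := by
  intro a ha
  have := Finsupp.support_single_subset ha
  simp only [Finset.mem_singleton] at this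
  subst this
  rfl

lemma apply_inl_eq_zero_of_isHomog_one (n m : ℕ) (u : V n m) (h : IsHomog n m u 1)
    (i : Fin n) : u (Sum.inl i) = 0 := by
  by_contra hne
  have hmem : Sum.inl i ∈ u.support := Finsupp.mem_support_iff.2 hne
  have := h _ hmem
  simp only [par, Sum.elim_inl] at this
  exact zero_ne_one this

lemma isHomog_odd_of_even (n m : ℕ) (D : Module.End ℂ (V n m))
    (hpar : ∀ (u : V n m) (s : ZMod 2), IsHomog n m u s → IsHomog n m (D u) (s + 1))
    (i : Fin n) (r : ℂ) : IsHomog n m (D (Finsupp.single (Sum.inl i) r)) 1 := by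
  have := hpar _ 0 (isHomog_single_inl n m i r)
  simpa using this

lemma Y_succ_single (n m : ℕ) (i : Fin m) :
    Y n m (i.val + 1) = Finsupp.single (Sum.inr i) 1 := by
  rw [Y, dif_pos ⟨by omega, by omega⟩]
  congr 1

lemma zmod_one_val : ((1 : ZMod 2)).val = 1 := rfl
lemma zmod_zero_val : ((0 : ZMod 2)).val = 0 := rfl

end Aux

/-- Every odd superderivation of `L^{n,m}` kills the odd–odd superderivation identity:
`[D(y_i),y_j] - [y_i,D(y_j)] = 0`, the `x_1`-coefficient of every `D(y_i)` vanishes, and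
consequently `D` is a derivation of `L^{n,m}` regarded as a ℤ₂-graded Lie algebra. -/
theorem oddSuperderivation_modelFiliform (n m : ℕ) (hn : 1 ≤ n) (hm : 2 ≤ m)
    (D : Module.End ℂ (V n m))
    (hpar : ∀ (u : V n m) (s : ZMod 2), IsHomog n m u s → IsHomog n m (D u) (s + 1))
    (hder : ∀ (u v : V n m) (su : ZMod 2), IsHomog n m u su →
      D (br n m u v) = br n m (D u) v + ((-1 : ℂ) ^ su.val) • br n m u (D v)) :
    (∀ i j : Fin m,
      br n m (D (Y n m (i.val + 1))) (Y n m (j.val + 1)) -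
        br n m (Y n m (i.val + 1)) (D (Y n m (j.val + 1))) = 0) ∧
    (∀ i : Fin m, (D (Y n m (i.val + 1))) (Sum.inl ⟨0, hn⟩) = 0) ∧
    (∀ u v : V n m, D (br n m u v) = br n m (D u) v + br n m u (D v)) := by
  have hY : ∀ i : Fin m, Y n m (i.val + 1) = Finsupp.single (Sum.inr i) 1 :=
    Y_succ_single n m
  have hYhom : ∀ i : Fin m, IsHomog n m (Y n m (i.val + 1)) 1 := by
    intro i; rw [hY i]; exact isHomog_single_inr n m i 1
  -- Part 1
  have part1 : ∀ i j : Fin m,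
      br n m (D (Y n m (i.val + 1))) (Y n m (j.val + 1)) -
        br n m (Y n m (i.val + 1)) (D (Y n m (j.val + 1))) = 0 := by
    intro i j
    have h := hder (Y n m (i.val + 1)) (Y n m (j.val + 1)) 1 (hYhom i)
    have hzero : br n m (Y n m (i.val + 1)) (Y n m (j.val + 1)) = 0 := by
      rw [hY i, hY j, br_single_inr_left n m hn]
      simp [Finsupp.single_eq_of_ne]
    rw [hzero, map_zero] at h
    rw [zmod_one_val, pow_one, neg_one_smul] at h
    linear_combination (norm := module) -h
  -- Part 2
  have key : ∀ i j : Fin m,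
      ((D (Y n m (i.val + 1))) (Sum.inl ⟨0, hn⟩)) • Y n m (j.val + 2) +
        ((D (Y n m (j.val + 1))) (Sum.inl ⟨0, hn⟩)) • Y n m (i.val + 2) = 0 := by
    intro i j
    have h := part1 i j
    rw [sub_eq_zero] at h
    nth_rewrite 1 [hY j] at h
    rw [br_single_inr_right n m hn] at h
    nth_rewrite 2 [hY i] at h
    rw [br_single_inr_left n m hn] at h
    rw [mul_one, one_mul, smul_neg] at h
    linear_combination (norm := module) h
  have hY2 : Y n m 2 = Finsupp.single (Sum.inr (⟨1, by omega⟩ : Fin m)) 1 := by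
    rw [Y, dif_pos ⟨by omega, hm⟩]
  have hz : (2 : ℕ) = (⟨0, by omega⟩ : Fin m).val + 2 := rfl
  have a0 : (D (Y n m ((⟨0, by omega⟩ : Fin m).val + 1))) (Sum.inl ⟨0, hn⟩) = 0 := by
    have h := key ⟨0, by omega⟩ ⟨0, by omega⟩
    rw [← hz] at h
    have h2 := congrArg (fun w : V n m => w (Sum.inr (⟨1, by omega⟩ : Fin m))) h
    simp only [hY2, Finsupp.add_apply, Finsupp.smul_apply, Finsupp.coe_zero, Pi.zero_apply,
      Finsupp.single_eq_same, smul_eq_mul, mul_one] at h2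
    exact add_self_eq_zero.mp h2
  have part2 : ∀ i : Fin m, (D (Y n m (i.val + 1))) (Sum.inl ⟨0, hn⟩) = 0 := by
    intro i
    have h := key i ⟨0, by omega⟩
    rw [← hz, a0, zero_smul, add_zero] at h
    have h2 := congrArg (fun w : V n m => w (Sum.inr (⟨1, by omega⟩ : Fin m))) h
    simp only [hY2, Finsupp.smul_apply, Finsupp.coe_zero, Pi.zero_apply,
      Finsupp.single_eq_same, smul_eq_mul, mul_one] at h2
    exact h2
  -- x₁-coefficient of D v vanishes for every v
  have hDx1 : ∀ v : V n m, (D v) (Sum.inl ⟨0, hn⟩) = 0 := by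
    intro v
    induction v using Finsupp.induction with
    | zero => simp
    | single_add a r f _ _ ih =>
      rw [map_add, Finsupp.add_apply, ih, add_zero]
      rcases a with i | i
      · exact apply_inl_eq_zero_of_isHomog_one n m _
          (isHomog_odd_of_even n m D hpar i r) _
      · have hs : Finsupp.single (Sum.inr i) r = r • Y n m (i.val + 1) := by
          rw [hY i, Finsupp.smul_single, smul_eq_mul, mul_one]
        rw [hs, map_smul, Finsupp.smul_apply, part2 i, smul_zero]
  -- Part 3
  refine ⟨part1, part2, ?_⟩
  intro u v
  induction u using Finsupp.induction with
  | zero => simp [br_zero_left]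
  | single_add a r f _ _ ih =>
    rw [br_add_left, map_add, ih, map_add, br_add_left, br_add_left]
    have hsingle : D (br n m (Finsupp.single a r) v) =
        br n m (D (Finsupp.single a r)) v + br n m (Finsupp.single a r) (D v) := by
      rcases a with i | i
      · have h := hder (Finsupp.single (Sum.inl i) r) v 0 (isHomog_single_inl n m i r)
        rw [zmod_zero_val, pow_zero, one_smul] at h
        exact h
      · have h := hder (Finsupp.single (Sum.inr i) r) v 1 (isHomog_single_inr n m i r)
        rw [zmod_one_val, pow_one, neg_one_smul] at h
        have hz2 : br n m (Finsupp.single (Sum.inr i) r) (D v) = 0 := by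
          rw [br_single_inr_left n m hn, hDx1 v, mul_zero, zero_smul]
        rw [hz2] at h ⊢
        rw [neg_zero, add_zero] at h
        rw [add_zero]
        exact h
    rw [hsingle]
    abel

end ModelFiliform
end

section
/- For an odd superderivation D of L^{n,m}: if i ≥ 2, then D(y_i) = [x_1, D(y_{i-1})], and hence D(y_i) lies in the span of {x_3,...,x_n}; in particular the coefficient of x_1 in D(y_i) vanishes for all i ≥ 2. -/
/-!
The model filiform Lie superalgebra `L^{n,m}` with even basis `x_1,…,x_n` and odd
basis `y_1,…,y_m`, with nonzero brackets `[x_1,x_i] = -[x_i,x_1] = x_{i+1}` (2 ≤ i ≤ n-1)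
and `[x_1,y_j] = -[y_j,x_1] = y_{j+1}` (1 ≤ j ≤ m-1), satisfies super anticommutativity
and the super Jacobi identity.
-/

namespace ModelFiliform

lemma br_single_left (n m : ℕ) (a : Idx n m) (v : V n m) :
    br n m (Finsupp.single a 1) v = v.sum (fun b s => s • c n m a b) := by
  rw [br, brL, Finsupp.lsum_single, LinearMap.toSpanSingleton_apply, one_smul,
    Finsupp.lsum_apply]; rfl

lemma br_eq (n m : ℕ) (u v : V n m) :
    br n m u v = u.sum fun a r => v.sum fun b s => (r * s) • c n m a b := by
  rw [br, brL, Finsupp.lsum_apply, Finsupp.sum, Finsupp.sum, LinearMap.sum_apply]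
  refine Finset.sum_congr rfl fun a _ => ?_
  rw [LinearMap.toSpanSingleton_apply, LinearMap.smul_apply, Finsupp.lsum_apply,
    Finsupp.sum, Finsupp.sum, Finset.smul_sum]
  refine Finset.sum_congr rfl fun b _ => ?_
  simp [smul_smul]

lemma homog_Y (n m k : ℕ) : IsHomog n m (Y n m k) 1 := by
  intro a ha
  rw [Y] at ha
  split at ha
  · rcases Finset.mem_singleton.mp (Finsupp.support_single_subset ha) with rfl
    rfl
  · simp at ha

lemma homog_X1 (n m : ℕ) : IsHomog n m (X n m 1) 0 := by
  intro a ha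
  rw [X] at ha
  split at ha
  · rcases Finset.mem_singleton.mp (Finsupp.support_single_subset ha) with rfl
    rfl
  · simp at ha

lemma br_odd_odd (n m : ℕ) (u v : V n m) (hu : IsHomog n m u 1) (hv : IsHomog n m v 1) :
    br n m u v = 0 := by
  rw [br_eq, Finsupp.sum]
  refine Finset.sum_eq_zero fun a ha => ?_
  rw [Finsupp.sum]
  refine Finset.sum_eq_zero fun b hb => ?_
  obtain ⟨ja, rfl⟩ : ∃ j, a = Sum.inr j := by
    cases a with
    | inl j => exact absurd (hu _ ha) (by simp [par])
    | inr j => exact ⟨j, rfl⟩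
  obtain ⟨jb, rfl⟩ : ∃ j, b = Sum.inr j := by
    cases b with
    | inl j => exact absurd (hv _ hb) (by simp [par])
    | inr j => exact ⟨j, rfl⟩
  simp [c]

lemma X_mem_span (n m k : ℕ) (hk : 3 ≤ k) :
    X n m k ∈ Submodule.span ℂ {v : V n m | ∃ s : ℕ, 3 ≤ s ∧ s ≤ n ∧ v = X n m s} := by
  by_cases h : k ≤ n
  · exact Submodule.subset_span ⟨k, hk, h, rfl⟩
  · rw [X, dif_neg (by omega)]
    exact Submodule.zero_mem _

lemma X_apply_zero (n m k : ℕ) (hn : 1 ≤ n) (hk : 2 ≤ k) :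
    X n m k (Sum.inl ⟨0, hn⟩) = 0 := by
  rw [X]
  split
  · rw [Finsupp.single_apply, if_neg]
    · intro h
      have : k - 1 = 0 := congrArg Fin.val (Sum.inl.inj h)
      omega
  · rfl

lemma c_x1_inl (n m : ℕ) (hn : 1 ≤ n) (j : Fin n) :
    c n m (Sum.inl ⟨0, hn⟩) (Sum.inl j) = if 1 ≤ j.val then X n m (j.val + 2) else 0 := by
  rw [c]
  by_cases h1 : 1 ≤ j.val
  · rw [if_pos ⟨rfl, h1⟩, if_pos h1]
  · rw [if_neg (fun h => h1 h.2), if_neg (fun h => Nat.not_succ_le_zero 0 h.2), if_neg h1]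

/-- For an odd superderivation `D` of `L^{n,m}` and `i ≥ 2` one has
`D(y_i) = [x_1, D(y_{i-1})]`, so `D(y_i)` lies in the span of `x_3,…,x_n`; in particular the
coefficient of `x_1` in `D(y_i)` vanishes for `i ≥ 2`. -/
theorem oddSuperderivation_on_y (n m : ℕ) (hn : 1 ≤ n)
    (D : Module.End ℂ (V n m))
    (hpar : ∀ (u : V n m) (s : ZMod 2), IsHomog n m u s → IsHomog n m (D u) (s + 1))
    (hder : ∀ (u v : V n m) (su : ZMod 2), IsHomog n m u su →
      D (br n m u v) = br n m (D u) v + ((-1 : ℂ) ^ su.val) • br n m u (D v)) :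
    ∀ i : ℕ, 2 ≤ i → i ≤ m →
      D (Y n m i) = br n m (X n m 1) (D (Y n m (i - 1))) ∧
      D (Y n m i) ∈ Submodule.span ℂ {v | ∃ s : ℕ, 3 ≤ s ∧ s ≤ n ∧ v = X n m s} ∧
      (D (Y n m i)) (Sum.inl ⟨0, hn⟩) = 0 := by
  intro i hi2 him
  have hX1 : X n m 1 = Finsupp.single (Sum.inl ⟨0, hn⟩) 1 := by
    rw [X, dif_pos ⟨le_refl 1, hn⟩]
  have h1 : 1 ≤ i - 1 ∧ i - 1 ≤ m := ⟨by omega, by omega⟩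
  have hYi1 : Y n m (i - 1) = Finsupp.single (Sum.inr ⟨i - 1 - 1, by omega⟩) 1 := by
    rw [Y, dif_pos h1]
  -- step 1 : Y i = [x1, y_{i-1}]
  have hY : Y n m i = br n m (X n m 1) (Y n m (i - 1)) := by
    rw [hX1, hYi1, br_single_left, Finsupp.sum_single_index (by simp), one_smul]
    show Y n m i = c n m (Sum.inl ⟨0, hn⟩) (Sum.inr ⟨i - 1 - 1, by omega⟩)
    rw [c]
    simp only [if_pos rfl]
    congr 1
    omega
  -- homogeneity of images
  have hDX1 : IsHomog n m (D (X n m 1)) 1 := by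
    simpa using hpar _ 0 (homog_X1 n m)
  have hDY : IsHomog n m (D (Y n m (i - 1))) 0 := by
    have := hpar _ 1 (homog_Y n m (i - 1))
    rwa [show (1 + 1 : ZMod 2) = 0 from by decide] at this
  have key : D (Y n m i) = br n m (X n m 1) (D (Y n m (i - 1))) := by
    rw [hY, hder _ _ 0 (homog_X1 n m),
      br_odd_odd n m _ _ hDX1 (homog_Y n m (i - 1)), zero_add]
    simp
  refine ⟨key, ?_, ?_⟩
  · rw [key, hX1, br_single_left, Finsupp.sum]
    refine Submodule.sum_mem _ fun b hb => Submodule.smul_mem _ _ ?_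
    obtain ⟨j, rfl⟩ : ∃ j, b = Sum.inl j := by
      cases b with
      | inl j => exact ⟨j, rfl⟩
      | inr j => exact absurd (hDY _ hb) (by simp [par])
    rw [c_x1_inl]
    split
    · exact X_mem_span n m _ (by omega)
    · exact Submodule.zero_mem _
  · rw [key, hX1, br_single_left, Finsupp.sum_apply]
    rw [Finsupp.sum]
    refine Finset.sum_eq_zero fun b hb => ?_
    obtain ⟨j, rfl⟩ : ∃ j, b = Sum.inl j := by
      cases b with
      | inl j => exact ⟨j, rfl⟩
      | inr j => exact absurd (hDY _ hb) (by simp [par])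
    rw [Finsupp.smul_apply, c_x1_inl]
    split
    · rw [X_apply_zero n m _ hn (by omega), smul_zero]
    · simp

end ModelFiliform
end

section
/- Every odd superderivation D of the model nilpotent Lie superalgebra N(n_1,...,n_k,1 | m_1,...,m_p) satisfies: for each odd generator index i ∈ {1, m_1+1, m_1+m_2+1, ..., m_1+...+m_{p-1}+1}, the coefficient of x_1 in D(y_i) is zero (this follows from 0 = D([y_i,y_i]) = [D(y_i),y_i] - [y_i,D(y_i)] = 2α_1 y_{i+1}); for non-generator indices i, D(y_i) = [x_1, D(y_{i-1})] lies in the span of non-generator even basis vectors. Consequently, every odd superderivation of N is a derivation of N regarded as a Z_2-graded Lie algebra. -/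
namespace ModelNilpotent

open Classical

/-- Partial sums: `P f j = f 0 + … + f (j-1)`. -/
abbrev P (f : ℕ → ℕ) (j : ℕ) : ℕ := ∑ t ∈ Finset.range j, f t

/-- Number of even basis vectors: `n_1 + … + n_k + 1`. -/
abbrev NN (k : ℕ) (nn : ℕ → ℕ) : ℕ := P nn k + 1

/-- Number of odd basis vectors: `m_1 + … + m_p`. -/
abbrev MM (p : ℕ) (mm : ℕ → ℕ) : ℕ := P mm p

/-- Index type of `N(n_1,…,n_k,1 | m_1,…,m_p)`. -/
abbrev Idx (k p : ℕ) (nn mm : ℕ → ℕ) := Fin (NN k nn) ⊕ Fin (MM p mm)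

/-- Underlying vector space over ℂ. -/
abbrev V (k p : ℕ) (nn mm : ℕ → ℕ) := Idx k p nn mm →₀ ℂ

/-- `X … s` is the even basis vector `x_s` (1-based), or `0` if out of range. -/
noncomputable def X (k p : ℕ) (nn mm : ℕ → ℕ) (s : ℕ) : V k p nn mm :=
  if h : 1 ≤ s ∧ s ≤ NN k nn then Finsupp.single (Sum.inl ⟨s - 1, by omega⟩) 1 else 0

/-- `Y … s` is the odd basis vector `y_s` (1-based), or `0` if out of range. -/
noncomputable def Y (k p : ℕ) (nn mm : ℕ → ℕ) (s : ℕ) : V k p nn mm :=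
  if h : 1 ≤ s ∧ s ≤ MM p mm then Finsupp.single (Sum.inr ⟨s - 1, by omega⟩) 1 else 0

/-- `[x_1, x_s] = x_{s+1}` holds exactly for `s` in one of the even blocks:
`s ∈ {2,…,n_1} ∪ ⋃_j {n_1+…+n_j+2, …, n_1+…+n_{j+1}}`. -/
def EvOK (k : ℕ) (nn : ℕ → ℕ) (s : ℕ) : Prop :=
  ∃ j < k, P nn j + 2 ≤ s ∧ s ≤ P nn (j + 1)

/-- `[x_1, y_s] = y_{s+1}` holds exactly for `s` in one of the odd blocks minus its last
element: `s ∈ ⋃_j {m_1+…+m_j+1, …, m_1+…+m_{j+1}-1}`. -/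
def OdOK (p : ℕ) (mm : ℕ → ℕ) (s : ℕ) : Prop :=
  ∃ j < p, P mm j + 1 ≤ s ∧ s + 1 ≤ P mm (j + 1)

/-- Structure constants of `N(n_1,…,n_k,1 | m_1,…,m_p)`. -/
noncomputable def c (k p : ℕ) (nn mm : ℕ → ℕ) :
    Idx k p nn mm → Idx k p nn mm → V k p nn mm
  | Sum.inl i, Sum.inl j =>
      if i.val = 0 ∧ EvOK k nn (j.val + 1) then X k p nn mm (j.val + 2)
      else if j.val = 0 ∧ EvOK k nn (i.val + 1) then -X k p nn mm (i.val + 2) else 0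
  | Sum.inl i, Sum.inr j =>
      if i.val = 0 ∧ OdOK p mm (j.val + 1) then Y k p nn mm (j.val + 2) else 0
  | Sum.inr j, Sum.inl i =>
      if i.val = 0 ∧ OdOK p mm (j.val + 1) then -Y k p nn mm (j.val + 2) else 0
  | Sum.inr _, Sum.inr _ => 0

/-- The bracket, as a bilinear map. -/
noncomputable def br (k p : ℕ) (nn mm : ℕ → ℕ) (u v : V k p nn mm) : V k p nn mm :=
  Finsupp.lsum ℂ (fun a =>
    LinearMap.toSpanSingleton ℂ (V k p nn mm →ₗ[ℂ] V k p nn mm)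
      (Finsupp.lsum ℂ (fun b =>
        LinearMap.toSpanSingleton ℂ (V k p nn mm) (c k p nn mm a b)))) u v

/-- Parity of the basis indices. -/
def par (k p : ℕ) (nn mm : ℕ → ℕ) : Idx k p nn mm → ZMod 2 :=
  Sum.elim (fun _ => 0) (fun _ => 1)

/-- `u` is homogeneous of degree `s`. -/
def IsHomog (k p : ℕ) (nn mm : ℕ → ℕ) (u : V k p nn mm) (s : ZMod 2) : Prop :=
  ∀ a ∈ u.support, par k p nn mm a = s


section Aux

variable (k p : ℕ) (nn mm : ℕ → ℕ)

lemma P_mono (f : ℕ → ℕ) {a b : ℕ} (h : a ≤ b) : P f a ≤ P f b :=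
  Finset.sum_le_sum_of_subset (Finset.range_subset_range.2 h)

lemma P_succ (f : ℕ → ℕ) (j : ℕ) : P f (j + 1) = P f j + f j := by
  simp [P, Finset.sum_range_succ]

lemma NN_pos : 1 ≤ NN k nn := Nat.succ_le_succ (Nat.zero_le _)

lemma exists_block (q i : ℕ) (h1 : 1 ≤ i) (h2 : i ≤ P mm q) :
    ∃ j < q, P mm j < i ∧ i ≤ P mm (j + 1) := by
  induction q with
  | zero => simp [P] at h2; omega
  | succ q ih =>
    by_cases h : i ≤ P mm q
    · obtain ⟨j, hj, h3, h4⟩ := ih h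
      exact ⟨j, by omega, h3, h4⟩
    · exact ⟨q, by omega, by omega, h2⟩

lemma br_add_left (u1 u2 v : V k p nn mm) :
    br k p nn mm (u1 + u2) v = br k p nn mm u1 v + br k p nn mm u2 v := by
  simp only [br, map_add, LinearMap.add_apply]

lemma br_zero_left (v : V k p nn mm) : br k p nn mm 0 v = 0 := by
  simp only [br, map_zero, LinearMap.zero_apply]

lemma br_add_right (u v1 v2 : V k p nn mm) :
    br k p nn mm u (v1 + v2) = br k p nn mm u v1 + br k p nn mm u v2 := by
  simp only [br, map_add]

lemma br_zero_right (u : V k p nn mm) : br k p nn mm u 0 = 0 := by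
  simp only [br, map_zero]

lemma br_single_single (a b : Idx k p nn mm) (r s : ℂ) :
    br k p nn mm (Finsupp.single a r) (Finsupp.single b s) = r • s • c k p nn mm a b := by
  simp only [br, Finsupp.lsum_single, LinearMap.toSpanSingleton_apply, LinearMap.smul_apply]

lemma br_single_left (a : Idx k p nn mm) (r : ℂ) (v : V k p nn mm) :
    br k p nn mm (Finsupp.single a r) v = r • v.sum (fun b s => s • c k p nn mm a b) := by
  simp only [br, Finsupp.lsum_single, LinearMap.toSpanSingleton_apply, LinearMap.smul_apply]
  rfl

lemma c_inl_inr (t : Fin (NN k nn)) (u : Fin (MM p mm)) :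
    c k p nn mm (Sum.inl t) (Sum.inr u)
      = if t.val = 0 ∧ OdOK p mm (u.val + 1) then Y k p nn mm (u.val + 2) else 0 := rfl

lemma c_inr_inl (u : Fin (MM p mm)) (t : Fin (NN k nn)) :
    c k p nn mm (Sum.inr u) (Sum.inl t)
      = if t.val = 0 ∧ OdOK p mm (u.val + 1) then -Y k p nn mm (u.val + 2) else 0 := rfl

lemma c_inl_inl (t t' : Fin (NN k nn)) :
    c k p nn mm (Sum.inl t) (Sum.inl t')
      = if t.val = 0 ∧ EvOK k nn (t'.val + 1) then X k p nn mm (t'.val + 2)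
        else if t'.val = 0 ∧ EvOK k nn (t.val + 1) then -X k p nn mm (t.val + 2)
        else 0 := rfl

lemma c_inr_inr (u u' : Fin (MM p mm)) :
    c k p nn mm (Sum.inr u) (Sum.inr u') = 0 := rfl

lemma c_x_odd (t : Fin (NN k nn)) (u : Fin (MM p mm)) (ht : t.val = 0)
    (h : OdOK p mm (u.val + 1)) :
    c k p nn mm (Sum.inl t) (Sum.inr u) = Y k p nn mm (u.val + 2) := by
  rw [c_inl_inr, if_pos (And.intro ht h)]

lemma c_odd_x (u : Fin (MM p mm)) (t : Fin (NN k nn)) (ht : t.val = 0)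
    (h : OdOK p mm (u.val + 1)) :
    c k p nn mm (Sum.inr u) (Sum.inl t) = -Y k p nn mm (u.val + 2) := by
  rw [c_inr_inl, if_pos (And.intro ht h)]

lemma c_x_odd_zero (t : Fin (NN k nn)) (u : Fin (MM p mm)) (ht : t.val ≠ 0) :
    c k p nn mm (Sum.inl t) (Sum.inr u) = 0 := by
  rw [c_inl_inr, if_neg (fun h => ht h.1)]

lemma c_odd_x_zero (u : Fin (MM p mm)) (t : Fin (NN k nn)) (ht : t.val ≠ 0) :
    c k p nn mm (Sum.inr u) (Sum.inl t) = 0 := by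
  rw [c_inr_inl, if_neg (fun h => ht h.1)]

lemma X_eq (s : ℕ) (h1 : 1 ≤ s) (h2 : s ≤ NN k nn) :
    X k p nn mm s = Finsupp.single (Sum.inl ⟨s - 1, by omega⟩) 1 := by
  unfold X; rw [dif_pos ⟨h1, h2⟩]

lemma Y_eq (s : ℕ) (h1 : 1 ≤ s) (h2 : s ≤ MM p mm) :
    Y k p nn mm s = Finsupp.single (Sum.inr ⟨s - 1, by omega⟩) 1 := by
  unfold Y; rw [dif_pos ⟨h1, h2⟩]

lemma homog_single_inl (t : Fin (NN k nn)) (r : ℂ) :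
    IsHomog k p nn mm (Finsupp.single (Sum.inl t) r) 0 := by
  intro a ha
  have h := Finsupp.support_single_subset ha
  rw [Finset.mem_singleton] at h
  subst h; rfl

lemma homog_single_inr (t : Fin (MM p mm)) (r : ℂ) :
    IsHomog k p nn mm (Finsupp.single (Sum.inr t) r) 1 := by
  intro a ha
  have h := Finsupp.support_single_subset ha
  rw [Finset.mem_singleton] at h
  subst h; rfl

lemma homog_Y (s : ℕ) : IsHomog k p nn mm (Y k p nn mm s) 1 := by
  unfold Y; split
  · apply homog_single_inr
  · intro a ha; simp at ha

lemma homog_X (s : ℕ) : IsHomog k p nn mm (X k p nn mm s) 0 := by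
  unfold X; split
  · apply homog_single_inl
  · intro a ha; simp at ha

lemma homog_apply_eq_zero {u : V k p nn mm} {s : ZMod 2} (h : IsHomog k p nn mm u s)
    {a : Idx k p nn mm} (ha : par k p nn mm a ≠ s) : u a = 0 := by
  by_contra h0
  exact ha (h a (Finsupp.mem_support_iff.2 h0))

lemma single_inl_apply_x1 (u : Fin (NN k nn)) (t : ℂ) (hu : u.val ≠ 0) :
    (Finsupp.single (Sum.inl u) t : V k p nn mm) (Sum.inl ⟨0, Nat.succ_pos _⟩) = 0 := by
  rw [Finsupp.single_eq_of_ne]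
  simp only [ne_eq, Sum.inl.injEq]
  exact fun h => hu (congrArg Fin.val h).symm

lemma single_inr_apply_x1 (u : Fin (MM p mm)) (t : ℂ) :
    (Finsupp.single (Sum.inr u) t : V k p nn mm) (Sum.inl ⟨0, Nat.succ_pos _⟩) = 0 := by
  rw [Finsupp.single_eq_of_ne]; simp

lemma br_inr_left (s : Fin (MM p mm)) (r : ℂ) (w : V k p nn mm) :
    br k p nn mm (Finsupp.single (Sum.inr s) r) w
      = (r * w (Sum.inl ⟨0, Nat.succ_pos _⟩)) •
          c k p nn mm (Sum.inr s) (Sum.inl ⟨0, Nat.succ_pos _⟩) := by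
  induction w using Finsupp.induction_linear with
  | zero => rw [br_zero_right]; simp
  | add f g hf hg =>
    rw [br_add_right, Finsupp.add_apply, mul_add, add_smul, hf, hg]
  | single b t =>
    rw [br_single_single]
    rcases b with u | u
    · by_cases hu : u.val = 0
      · have hu' : u = ⟨0, Nat.succ_pos _⟩ := Fin.ext hu
        subst hu'
        rw [Finsupp.single_eq_same, mul_smul]
      · rw [c_odd_x_zero k p nn mm s u hu, single_inl_apply_x1 k p nn mm u t hu,
          mul_zero, zero_smul, smul_zero, smul_zero]
    · rw [c_inr_inr, single_inr_apply_x1, mul_zero, zero_smul, smul_zero, smul_zero]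

lemma br_inr_right (s : Fin (MM p mm)) (t : ℂ) (u : V k p nn mm) :
    br k p nn mm u (Finsupp.single (Sum.inr s) t)
      = (t * u (Sum.inl ⟨0, Nat.succ_pos _⟩)) •
          c k p nn mm (Sum.inl ⟨0, Nat.succ_pos _⟩) (Sum.inr s) := by
  induction u using Finsupp.induction_linear with
  | zero => rw [br_zero_left]; simp
  | add f g hf hg =>
    rw [br_add_left, Finsupp.add_apply, mul_add, add_smul, hf, hg]
  | single b r =>
    rw [br_single_single]
    rcases b with u | u
    · by_cases hu : u.val = 0
      · have hu' : u = ⟨0, Nat.succ_pos _⟩ := Fin.ext hu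
        subst hu'
        rw [Finsupp.single_eq_same, smul_comm, mul_smul]
      · rw [c_x_odd_zero k p nn mm u s hu, single_inl_apply_x1 k p nn mm u r hu,
          mul_zero, zero_smul, smul_zero, smul_zero]
    · rw [c_inr_inr, single_inr_apply_x1, mul_zero, zero_smul, smul_zero, smul_zero]

lemma br_gen (i : ℕ) (h1 : 1 ≤ i) (h2 : i + 1 ≤ MM p mm) (hOd : OdOK p mm i)
    (w : V k p nn mm) :
    br k p nn mm w (Y k p nn mm i) - br k p nn mm (Y k p nn mm i) w
      = (2 * w (Sum.inl ⟨0, Nat.succ_pos _⟩)) • Y k p nn mm (i + 1) := by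
  have hYi : Y k p nn mm i = Finsupp.single (Sum.inr ⟨i - 1, by omega⟩) 1 :=
    Y_eq k p nn mm i h1 (by omega)
  have hOd' : OdOK p mm (i - 1 + 1) := by
    have h : i - 1 + 1 = i := by omega
    rw [h]; exact hOd
  have hind : i - 1 + 2 = i + 1 := by omega
  induction w using Finsupp.induction_linear with
  | zero => simp [br_zero_left, br_zero_right]
  | add f g hf hg =>
    rw [br_add_left, br_add_right, Finsupp.add_apply, mul_add, add_smul, ← hf, ← hg]
    abel
  | single a r =>
    rw [hYi, br_single_single, br_single_single]
    rcases a with u | u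
    · by_cases hu : u.val = 0
      · have hc1 : c k p nn mm (Sum.inl u) (Sum.inr ⟨i - 1, by omega⟩)
            = Y k p nn mm (i + 1) := by
          rw [c_x_odd k p nn mm u ⟨i - 1, by omega⟩ hu hOd']
          exact congrArg (Y k p nn mm) hind
        have hc2 : c k p nn mm (Sum.inr ⟨i - 1, by omega⟩) (Sum.inl u)
            = -Y k p nn mm (i + 1) := by
          rw [c_odd_x k p nn mm ⟨i - 1, by omega⟩ u hu hOd']
          exact congrArg (fun z => -Y k p nn mm z) hind
        have hu' : u = ⟨0, Nat.succ_pos _⟩ := Fin.ext hu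
        subst hu'
        rw [hc1, hc2, Finsupp.single_eq_same, smul_neg, smul_neg, sub_neg_eq_add,
          one_smul, smul_comm (1 : ℂ) r, one_smul, two_mul, add_smul]
      · rw [c_x_odd_zero k p nn mm u _ hu, c_odd_x_zero k p nn mm _ u hu,
          single_inl_apply_x1 k p nn mm u r hu, mul_zero, zero_smul]
        simp
    · rw [c_inr_inr, c_inr_inr, single_inr_apply_x1, mul_zero, zero_smul]
      simp

lemma brX1_Y (i : ℕ) (h2 : 2 ≤ i) (hMM : i ≤ MM p mm) (hOd : OdOK p mm (i - 1)) :
    br k p nn mm (X k p nn mm 1) (Y k p nn mm (i - 1)) = Y k p nn mm i := by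
  rw [X_eq k p nn mm 1 le_rfl (NN_pos k nn), Y_eq k p nn mm (i - 1) (by omega) (by omega),
    br_single_single]
  have hOd' : OdOK p mm (i - 1 - 1 + 1) := by
    have h : i - 1 - 1 + 1 = i - 1 := by omega
    rw [h]; exact hOd
  have hind : i - 1 - 1 + 2 = i := by omega
  rw [c_x_odd k p nn mm ⟨1 - 1, Nat.succ_pos _⟩ ⟨i - 1 - 1, by omega⟩ rfl hOd']
  rw [show Y k p nn mm ((⟨i - 1 - 1, by omega⟩ : Fin (MM p mm)).val + 2) = Y k p nn mm i
    from congrArg (Y k p nn mm) hind, one_smul, one_smul]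

lemma brX1_mem_span (w : V k p nn mm) (hw : IsHomog k p nn mm w 0) :
    br k p nn mm (X k p nn mm 1) w ∈ Submodule.span ℂ
      {v | ∃ s : ℕ, 1 ≤ s ∧ s ≤ NN k nn ∧ s ≠ 1 ∧ (∀ j < k, s ≠ P nn j + 2) ∧
        v = X k p nn mm s} := by
  rw [X_eq k p nn mm 1 le_rfl (NN_pos k nn), br_single_left, one_smul, Finsupp.sum]
  apply Submodule.sum_mem
  intro b hb
  have hpb : par k p nn mm b = 0 := hw b hb
  rcases b with u | u
  · by_cases hE : EvOK k nn (u.val + 1)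
    · have hc : c k p nn mm (Sum.inl ⟨1 - 1, Nat.succ_pos _⟩) (Sum.inl u)
          = X k p nn mm (u.val + 2) := by
        rw [c_inl_inl, if_pos (And.intro rfl hE)]
      rw [hc]
      apply Submodule.smul_mem
      apply Submodule.subset_span
      obtain ⟨j, hj, hj1, hj2⟩ := hE
      have hle : P nn (j + 1) ≤ P nn k := P_mono nn (by omega)
      refine ⟨u.val + 2, by omega, ?_, by omega, ?_, rfl⟩
      · show u.val + 2 ≤ P nn k + 1
        omega
      · intro j' hj' hcon
        have hval : u.val = P nn j' := by omega
        rcases le_or_gt j' j with h' | h'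
        · have := P_mono nn h'
          omega
        · have := P_mono nn (show j + 1 ≤ j' from h')
          omega
    · have hc : c k p nn mm (Sum.inl ⟨1 - 1, Nat.succ_pos _⟩) (Sum.inl u) = 0 := by
        rw [c_inl_inl, if_neg (fun h => hE h.2), if_neg]
        rintro ⟨hu0, j, hjk, hj1, hj2⟩
        have he : (⟨1 - 1, Nat.succ_pos _⟩ : Fin (NN k nn)).val = 0 := rfl
        omega
      rw [hc, smul_zero]
      exact Submodule.zero_mem _
  · exfalso
    have h1 : (1 : ZMod 2) = 0 := hpb
    exact absurd h1 (by decide)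

end Aux

/-- Every odd superderivation `D` of `N(n_1,…,n_k,1 | m_1,…,m_p)`: for each odd
generator `y_i` (`i = m_1+…+m_j+1`) one has `[D(y_i),y_i] - [y_i,D(y_i)] = 0` and the
`x_1`-coefficient of `D(y_i)` vanishes; for each non-generator index `i ≥ 2`,
`D(y_i) = [x_1, D(y_{i-1})]` lies in the span of the non-generator even basis vectors.
Consequently `D` is a derivation of `N` regarded as a ℤ₂-graded Lie algebra. -/
theorem oddSuperderivations_N (k p : ℕ) (nn mm : ℕ → ℕ)
    (hnn : ∀ j < k, 1 ≤ nn j) (hmm : ∀ j < p, 2 ≤ mm j)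
    (D : Module.End ℂ (V k p nn mm))
    (hpar : ∀ (u : V k p nn mm) (s : ZMod 2),
      IsHomog k p nn mm u s → IsHomog k p nn mm (D u) (s + 1))
    (hder : ∀ (u v : V k p nn mm) (su : ZMod 2), IsHomog k p nn mm u su →
      D (br k p nn mm u v) =
        br k p nn mm (D u) v + ((-1 : ℂ) ^ su.val) • br k p nn mm u (D v)) :
    (∀ j < p,
      br k p nn mm (D (Y k p nn mm (P mm j + 1))) (Y k p nn mm (P mm j + 1)) -
        br k p nn mm (Y k p nn mm (P mm j + 1)) (D (Y k p nn mm (P mm j + 1))) = 0 ∧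
      (D (Y k p nn mm (P mm j + 1))) (Sum.inl ⟨0, Nat.succ_pos _⟩) = 0) ∧
    (∀ i : ℕ, 2 ≤ i → i ≤ MM p mm → (¬ ∃ j < p, i = P mm j + 1) →
      D (Y k p nn mm i) = br k p nn mm (X k p nn mm 1) (D (Y k p nn mm (i - 1))) ∧
      D (Y k p nn mm i) ∈ Submodule.span ℂ
        {v | ∃ s : ℕ, 1 ≤ s ∧ s ≤ NN k nn ∧ s ≠ 1 ∧ (∀ j < k, s ≠ P nn j + 2) ∧
          v = X k p nn mm s}) ∧
    (∀ u v : V k p nn mm,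
      D (br k p nn mm u v) = br k p nn mm (D u) v + br k p nn mm u (D v)) := by
  have hx1par : par k p nn mm (Sum.inl ⟨0, Nat.succ_pos _⟩) = 0 := rfl
  -- Part 1
  have key1 : ∀ j < p,
      br k p nn mm (D (Y k p nn mm (P mm j + 1))) (Y k p nn mm (P mm j + 1)) -
        br k p nn mm (Y k p nn mm (P mm j + 1)) (D (Y k p nn mm (P mm j + 1))) = 0 ∧
      (D (Y k p nn mm (P mm j + 1))) (Sum.inl ⟨0, Nat.succ_pos _⟩) = 0 := by
    intro j hj
    have hPs : P mm (j + 1) = P mm j + mm j := P_succ mm j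
    have hmmj := hmm j hj
    have hOd : OdOK p mm (P mm j + 1) := ⟨j, hj, le_rfl, by omega⟩
    have hle : P mm (j + 1) ≤ P mm p := P_mono mm (by omega)
    have h2 : P mm j + 1 + 1 ≤ MM p mm := by show _ ≤ P mm p; omega
    have hYY : br k p nn mm (Y k p nn mm (P mm j + 1)) (Y k p nn mm (P mm j + 1)) = 0 := by
      rw [Y_eq k p nn mm (P mm j + 1) (by omega) (by omega), br_single_single, c_inr_inr,
        smul_zero, smul_zero]
    have hD := hder (Y k p nn mm (P mm j + 1)) (Y k p nn mm (P mm j + 1)) 1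
      (homog_Y k p nn mm _)
    rw [hYY, map_zero, show ((1 : ZMod 2)).val = 1 from rfl, pow_one, neg_one_smul,
      ← sub_eq_add_neg] at hD
    have hconj1 := hD.symm
    refine ⟨hconj1, ?_⟩
    have hgen := br_gen k p nn mm (P mm j + 1) (by omega) h2 hOd
      (D (Y k p nn mm (P mm j + 1)))
    rw [hconj1] at hgen
    have h0 := hgen.symm
    rw [Y_eq k p nn mm (P mm j + 1 + 1) (by omega) h2] at h0
    have h0' := DFunLike.congr_fun h0 (Sum.inr ⟨P mm j + 1 + 1 - 1, by omega⟩)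
    rw [Finsupp.smul_apply, Finsupp.single_eq_same, Finsupp.zero_apply, smul_eq_mul,
      mul_one] at h0'
    rcases mul_eq_zero.1 h0' with h | h
    · norm_num at h
    · exact h
  -- Part 2
  have key2 : ∀ i : ℕ, 2 ≤ i → i ≤ MM p mm → (¬ ∃ j < p, i = P mm j + 1) →
      D (Y k p nn mm i) = br k p nn mm (X k p nn mm 1) (D (Y k p nn mm (i - 1))) ∧
      D (Y k p nn mm i) ∈ Submodule.span ℂ
        {v | ∃ s : ℕ, 1 ≤ s ∧ s ≤ NN k nn ∧ s ≠ 1 ∧ (∀ j < k, s ≠ P nn j + 2) ∧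
          v = X k p nn mm s} := by
    intro i h2 hMM hng
    obtain ⟨j, hj, hb1, hb2⟩ := exists_block mm p i (by omega) hMM
    have hne : i ≠ P mm j + 1 := fun h => hng ⟨j, hj, h⟩
    have hOd : OdOK p mm (i - 1) := ⟨j, hj, by omega, by omega⟩
    have hbr : br k p nn mm (X k p nn mm 1) (Y k p nn mm (i - 1)) = Y k p nn mm i :=
      brX1_Y k p nn mm i h2 hMM hOd
    have hDX : IsHomog k p nn mm (D (X k p nn mm 1)) 1 := by
      have := hpar (X k p nn mm 1) 0 (homog_X k p nn mm 1)
      rwa [zero_add] at this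
    have hodd : br k p nn mm (D (X k p nn mm 1)) (Y k p nn mm (i - 1)) = 0 := by
      rw [Y_eq k p nn mm (i - 1) (by omega) (by omega), br_inr_right,
        homog_apply_eq_zero k p nn mm hDX (by rw [hx1par]; decide), mul_zero, zero_smul]
    have hder0 := hder (X k p nn mm 1) (Y k p nn mm (i - 1)) 0 (homog_X k p nn mm 1)
    rw [hbr, show ((0 : ZMod 2)).val = 0 from rfl, pow_zero, one_smul, hodd, zero_add]
      at hder0
    refine ⟨hder0, ?_⟩
    rw [hder0]
    apply brX1_mem_span
    have := hpar (Y k p nn mm (i - 1)) 1 (homog_Y k p nn mm _)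
    rwa [show ((1 : ZMod 2) + 1) = 0 from by decide] at this
  -- coefficient of x_1 in D of any odd basis vector vanishes
  have lemA : ∀ s : ℕ, 1 ≤ s → s ≤ MM p mm →
      (D (Y k p nn mm s)) (Sum.inl ⟨0, Nat.succ_pos _⟩) = 0 := by
    intro s h1 hs
    by_cases hg : ∃ j < p, s = P mm j + 1
    · obtain ⟨j, hj, rfl⟩ := hg
      exact (key1 j hj).2
    · have hp : 0 < p := by
        rcases Nat.eq_zero_or_pos p with h | h
        · exfalso
          rw [h] at hs
          simp [MM, P] at hs
          omega
        · exact h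
      have h2 : 2 ≤ s := by
        rcases Nat.lt_or_ge s 2 with h | h
        · exfalso
          have hs1 : s = 1 := by omega
          exact hg ⟨0, hp, by simp [P, hs1]⟩
        · exact h
      have hmem := (key2 s h2 hs hg).2
      have hker : Submodule.span ℂ
          {v : V k p nn mm | ∃ s : ℕ, 1 ≤ s ∧ s ≤ NN k nn ∧ s ≠ 1 ∧
            (∀ j < k, s ≠ P nn j + 2) ∧ v = X k p nn mm s} ≤
          LinearMap.ker (Finsupp.lapply (M := ℂ)
            (Sum.inl (⟨0, Nat.succ_pos _⟩ : Fin (NN k nn)))) := by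
        rw [Submodule.span_le]
        rintro v ⟨t, ht1, ht2, ht3, _, rfl⟩
        simp only [SetLike.mem_coe, LinearMap.mem_ker, Finsupp.lapply_apply]
        rw [X_eq k p nn mm t ht1 ht2, Finsupp.single_eq_of_ne]
        simp only [ne_eq, Sum.inl.injEq, Fin.mk.injEq]
        omega
      have hfin := hker hmem
      rwa [LinearMap.mem_ker, Finsupp.lapply_apply] at hfin
  -- coefficient of x_1 in D of anything vanishes
  have hcoeff : ∀ v : V k p nn mm, (D v) (Sum.inl ⟨0, Nat.succ_pos _⟩) = 0 := by
    intro v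
    induction v using Finsupp.induction_linear with
    | zero => rw [map_zero]; rfl
    | add f g hf hg => rw [map_add, Finsupp.add_apply, hf, hg, add_zero]
    | single b t =>
      rcases b with u | u
      · have hh := hpar (Finsupp.single (Sum.inl u) t) 0 (homog_single_inl k p nn mm u t)
        rw [zero_add] at hh
        exact homog_apply_eq_zero k p nn mm hh (by rw [hx1par]; decide)
      · have hY : Finsupp.single (Sum.inr u) t = t • Y k p nn mm (u.val + 1) := by
          rw [Y_eq k p nn mm (u.val + 1) (by omega) u.isLt]
          rw [Finsupp.smul_single, smul_eq_mul, mul_one]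
          have hidx : (⟨u.val + 1 - 1, by omega⟩ : Fin (MM p mm)) = u := Fin.ext (Nat.succ_sub_one u.val)
          rw [hidx]
        rw [hY, map_smul, Finsupp.smul_apply,
          lemA (u.val + 1) (by omega) u.isLt, smul_zero]
  refine ⟨key1, key2, ?_⟩
  intro u v
  induction u using Finsupp.induction_linear with
  | zero => simp only [br_zero_left, map_zero, add_zero]
  | add f g hf hg =>
    rw [br_add_left]
    simp only [map_add]
    simp only [br_add_left]
    rw [hf, hg]
    abel
  | single a r =>
    rcases a with b | b
    · have h := hder (Finsupp.single (Sum.inl b) r) v 0 (homog_single_inl k p nn mm b r)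
      rwa [show ((0 : ZMod 2)).val = 0 from rfl, pow_zero, one_smul] at h
    · have h := hder (Finsupp.single (Sum.inr b) r) v 1 (homog_single_inr k p nn mm b r)
      rw [show ((1 : ZMod 2)).val = 1 from rfl, pow_one, neg_one_smul] at h
      have hz : br k p nn mm (Finsupp.single (Sum.inr b) r) (D v) = 0 := by
        rw [br_inr_left, hcoeff v, mul_zero, zero_smul]
      rw [hz] at h ⊢
      rw [neg_zero] at h
      rw [h]

end ModelNilpotent
end
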